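/- Let E be a finite-dimensional real normed vector space and C : E → E a C^∞ map such that the induced multiplication (X∘Y)(p) = (D²C)(p)(X(p), Y(p)) is associative and admits an identity: a smooth vector field e with (D²C)(p)(e(p), v) = v for all p ∈ E, v ∈ E. Then the identity e satisfies condition (*): for every smooth vector field Y, ∇_Y e = Y ∘ (∇_e e), i.e. (De)(p)(Y(p)) = (D²C)(p)(Y(p), (De)(p)(e(p))) for all p. -/

import Mathlib

open ContDiff

variable {E : Type*} [NormedAddCommGroup E] [NormedSpace ℝ E]

/-- Lie bracket of vector fields on a normed space:
`[X,Y](p) = (DY)(p)(X(p)) - (DX)(p)(Y(p))`. -/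
noncomputable def lieB (X Y : E → E) : E → E :=
  fun p => fderiv ℝ Y p (X p) - fderiv ℝ X p (Y p)

/-- Multiplication on vector fields induced by a vector potential `C`:
`(X ∘ Y)(p) = (D²C)(p)(X(p), Y(p))`. -/
noncomputable def mulC (C : E → E) (X Y : E → E) : E → E :=
  fun p => fderiv ℝ (fderiv ℝ C) p (X p) (Y p)

/-- The Hertling–Manin expression `P_X(Z,W) = [X, Z∘W] - [X,Z]∘W - Z∘[X,W]`. -/
noncomputable def hmP (C : E → E) (X Z W : E → E) : E → E :=
  fun p => lieB X (mulC C Z W) p - mulC C (lieB X Z) W p - mulC C Z (lieB X W) p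


theorem stmt7' {E : Type*} [NormedAddCommGroup E] [NormedSpace ℝ E] [FiniteDimensional ℝ E]
    (C : E → E) (hC : ContDiff ℝ ∞ C)
    (e : E → E) (he : ContDiff ℝ ∞ e)
    (hid : ∀ p v : E, fderiv ℝ (fderiv ℝ C) p (e p) v = v) :
    ∀ Y : E → E, ContDiff ℝ ∞ Y →
      (fun p => fderiv ℝ e p (Y p))
        = fun p => fderiv ℝ (fderiv ℝ C) p (Y p) (fderiv ℝ e p (e p)) := by
  have h2inf : (2 : WithTop ℕ∞) ≤ ∞ := WithTop.coe_le_coe.mpr le_top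
  set B : E → E →L[ℝ] E →L[ℝ] E := fderiv ℝ (fderiv ℝ C) with hBdef
  have hC1 : ContDiff ℝ ∞ (fderiv ℝ C) := hC.fderiv_right (by simp)
  have hB : ContDiff ℝ ∞ B := hC1.fderiv_right (by simp)
  -- symmetry of B
  have hBsymm : ∀ p u v : E, B p u v = B p v u := fun p u v =>
    (hC.contDiffAt.isSymmSndFDerivAt (by simpa [minSmoothness_of_isRCLikeNormedField] using h2inf)) u v
  -- third derivative
  set T : E → E →L[ℝ] E →L[ℝ] E →L[ℝ] E := fderiv ℝ B with hTdef
  have hT12 : ∀ p u v : E, T p u v = T p v u := fun p u v =>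
    (hC1.contDiffAt.isSymmSndFDerivAt (by simpa [minSmoothness_of_isRCLikeNormedField] using h2inf)) u v
  have hT23 : ∀ p u v w : E, T p u v w = T p u w v := by
    intro p u v w
    have hdiff : DifferentiableAt ℝ B p := hB.differentiable (by simp) p
    have h1 : ∀ v w : E, fderiv ℝ (fun q => B q v w) p = ((T p).flip v).flip w := by
      intro v w
      have h0 : HasFDerivAt (fun q => B q v) ((T p).flip v) p := by
        have := (hdiff.hasFDerivAt).clm_apply (hasFDerivAt_const v p)
        simpa using this
      have : HasFDerivAt (fun q => B q v w) (((T p).flip v).flip w) p := by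
        have := h0.clm_apply (hasFDerivAt_const w p)
        simpa using this
      exact this.fderiv
    have heq : (fun q => B q v w) = (fun q => B q w v) := by
      funext q; exact hBsymm q v w
    have h2 := h1 v w
    rw [heq, h1 w v] at h2
    have h3 := DFunLike.congr_fun h2 u
    simpa using h3.symm
  -- differentiate the identity: B p (De u) v = - T p u (e p) v
  have key0 : ∀ p u v : E, B p (fderiv ℝ e p u) v = - T p u (e p) v := by
    intro p u v
    have hdB : DifferentiableAt ℝ B p := hB.differentiable (by simp) p
    have hde : DifferentiableAt ℝ e p := he.differentiable (by simp) p
    have hm : HasFDerivAt (fun q => B q (e q) v)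
        ((((B p).comp (fderiv ℝ e p)) + (T p).flip (e p)).flip v) p := by
      have h0 : HasFDerivAt (fun q => B q (e q))
          ((B p).comp (fderiv ℝ e p) + (T p).flip (e p)) p :=
        hdB.hasFDerivAt.clm_apply hde.hasFDerivAt
      have := h0.clm_apply (hasFDerivAt_const v p)
      simpa using this
    have hconst : (fun q => B q (e q) v) = fun _ => v := by
      funext q; exact hid q v
    rw [hconst] at hm
    have h0 : (0 : E →L[ℝ] E) = (((B p).comp (fderiv ℝ e p)) + (T p).flip (e p)).flip v :=
      (hasFDerivAt_const v p).unique hm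
    have h1 := congrFun (congrArg (fun (L : E →L[ℝ] E) => (L : E → E)) h0.symm) u
    simp only [ContinuousLinearMap.flip_apply, ContinuousLinearMap.add_apply,
      ContinuousLinearMap.comp_apply, ContinuousLinearMap.zero_apply] at h1
    linear_combination (norm := abel) h1
  have key : ∀ p u v : E, B p (fderiv ℝ e p u) v = B p u (fderiv ℝ e p v) := by
    intro p u v
    have h13 : T p u (e p) v = T p v (e p) u := by
      calc T p u (e p) v = T p u v (e p) := hT23 p u (e p) v
        _ = T p v u (e p) := DFunLike.congr_fun (hT12 p u v) (e p)
        _ = T p v (e p) u := hT23 p v u (e p)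
    rw [key0, h13, ← key0, hBsymm]
  intro Y hY
  funext p
  calc fderiv ℝ e p (Y p) = B p (e p) (fderiv ℝ e p (Y p)) := (hid p _).symm
    _ = B p (fderiv ℝ e p (e p)) (Y p) := (key p (e p) (Y p)).symm
    _ = B p (Y p) (fderiv ℝ e p (e p)) := hBsymm p _ _


/-- the identity `e` of an associative multiplication with a compatible
flat structure satisfies `∇_Y e = Y ∘ (∇_e e)` for every smooth `Y`. -/
theorem stmt7 {E : Type*} [NormedAddCommGroup E] [NormedSpace ℝ E] [FiniteDimensional ℝ E]
    (C : E → E) (hC : ContDiff ℝ ∞ C)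
    (hassoc : ∀ p u v w : E,
      fderiv ℝ (fderiv ℝ C) p (fderiv ℝ (fderiv ℝ C) p u v) w
        = fderiv ℝ (fderiv ℝ C) p u (fderiv ℝ (fderiv ℝ C) p v w))
    (e : E → E) (he : ContDiff ℝ ∞ e)
    (hid : ∀ p v : E, fderiv ℝ (fderiv ℝ C) p (e p) v = v) :
    ∀ Y : E → E, ContDiff ℝ ∞ Y →
      (fun p => fderiv ℝ e p (Y p)) = mulC C Y (fun p => fderiv ℝ e p (e p)) := by
  intro Y hY
  exact stmt7' C hC e he hid Y hY
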